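/- arXiv:1605.02165 — 7 statements merged into one kernel-verified Lean document; each statement's English description precedes it below -/
import Mathlib

section
/- Let α ∈ (0,1), β > 0, and let a, b ≥ 0 satisfy a ≥ 2b·cosh(βπ/2)·√(1 + tan²(απ/2)·tanh²(βπ/2)). Then Re φ_{a,b}(iω) ≥ 1 for every ω > 0. In particular, under the thermodynamical restrictions (T3₁) and (T3₂), Re P(iω) ≥ 1 and Re Q(iω) ≥ 1 for all ω > 0. -/
/-- `φ_{a,b}(s) = 1 + a·s^α + b·(s^{α+iβ} + s^{α−iβ})`, with principal complex powers. -/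
noncomputable def phi (α β a b : ℝ) (s : ℂ) : ℂ :=
  1 + (a : ℂ) * s ^ (α : ℂ) +
    (b : ℂ) * (s ^ ((α : ℂ) + Complex.I * (β : ℂ)) + s ^ ((α : ℂ) - Complex.I * (β : ℂ)))

/-- The constant `cosh(βπ/2)·√(1 + tan²(απ/2)·tanh²(βπ/2))` appearing in restrictions (T3). -/
noncomputable def Ctan (α β : ℝ) : ℝ :=
  Real.cosh (β * (Real.pi / 2)) *
    Real.sqrt (1 + (Real.tan (α * (Real.pi / 2)) * Real.tanh (β * (Real.pi / 2))) ^ 2)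

lemma mylog (ω : ℝ) (hω : 0 < ω) :
    Complex.log (Complex.I * ω) = (Real.log ω : ℂ) + (Real.pi/2 : ℝ) * Complex.I := by
  rw [mul_comm, Complex.log]
  have h1 : ‖(ω:ℂ) * Complex.I‖ = ω := by
    simp [abs_of_pos hω]
  have h2 : Complex.arg ((ω:ℂ) * Complex.I) = Real.pi/2 := by
    rw [Complex.arg_real_mul _ hω, Complex.arg_I]
  rw [h1, h2]

lemma cpow_re (ω x y : ℝ) (hω : 0 < ω) :
    ((Complex.I * ω) ^ ((x:ℂ) + Complex.I * (y:ℂ))).re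
      = Real.exp (x * Real.log ω - y * (Real.pi/2)) *
        Real.cos (x * (Real.pi/2) + y * Real.log ω) := by
  have hne : Complex.I * (ω:ℂ) ≠ 0 := by
    simp [Complex.ext_iff, hω.ne']
  rw [Complex.cpow_def_of_ne_zero hne, mylog ω hω, Complex.exp_re]
  congr 1
  · congr 1
    simp [Complex.add_re, Complex.mul_re, Complex.mul_im]
    ring
  · congr 1
    simp [Complex.add_im, Complex.mul_re, Complex.mul_im]
    ring

lemma key (α β a b t : ℝ) (hα : α ∈ Set.Ioo (0:ℝ) 1) (hβ : 0 < β)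
    (hb : 0 ≤ b) (hab : 2 * b * Ctan α β ≤ a) :
    0 ≤ a * Real.cos (α*(Real.pi/2)) +
      b * (Real.exp (-(β*(Real.pi/2))) * Real.cos (α*(Real.pi/2) + t)
         + Real.exp (β*(Real.pi/2)) * Real.cos (α*(Real.pi/2) - t)) := by
  set A := α*(Real.pi/2) with hA
  set B := β*(Real.pi/2) with hB
  have hπ := Real.pi_pos
  have hcos : 0 < Real.cos A := by
    apply Real.cos_pos_of_mem_Ioo
    constructor
    · nlinarith [hα.1, hα.2]
    · nlinarith [hα.1, hα.2]
  have hcosh : 0 < Real.cosh B := Real.cosh_pos B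
  set c := Real.cosh B * Real.cos A with hc
  set d := Real.sinh B * Real.sin A with hd
  have hrw : Real.exp (-B) * Real.cos (A + t) + Real.exp B * Real.cos (A - t)
      = 2 * (c * Real.cos t + d * Real.sin t) := by
    rw [Real.cos_add, Real.cos_sub, Real.cosh_eq, Real.sinh_eq] at *
    simp only [hc, hd, Real.cosh_eq, Real.sinh_eq]
    ring
  rw [hrw]
  have hX : Ctan α β * Real.cos A = Real.sqrt (c^2 + d^2) := by
    have h1 : c^2 * (1 + (Real.tan A * Real.tanh B)^2) = c^2 + d^2 := by
      rw [Real.tan_eq_sin_div_cos, Real.tanh_eq_sinh_div_cosh, hc, hd]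
      field_simp
    rw [Ctan, ← hA, ← hB, mul_assoc, mul_comm (Real.sqrt _), ← mul_assoc,
      ← Real.sqrt_sq (le_of_lt (mul_pos hcosh hcos)),
      ← Real.sqrt_mul (sq_nonneg _)]
    congr 1
  have hsq : (c * Real.cos t + d * Real.sin t)^2 ≤ c^2 + d^2 := by
    nlinarith [sq_nonneg (c * Real.sin t - d * Real.cos t), Real.sin_sq_add_cos_sq t]
  have hnn : (0:ℝ) ≤ c^2 + d^2 := by positivity
  have hge : -(Real.sqrt (c^2+d^2)) ≤ c * Real.cos t + d * Real.sin t := by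
    nlinarith [Real.sq_sqrt hnn, Real.sqrt_nonneg (c^2+d^2),
      sq_nonneg (c * Real.cos t + d * Real.sin t + Real.sqrt (c^2+d^2))]
  nlinarith [mul_le_mul_of_nonneg_left hge hb]

/-- If `a, b ≥ 0` satisfy `a ≥ 2b·cosh(βπ/2)·√(1 + tan²(απ/2)·tanh²(βπ/2))` then
`Re φ_{a,b}(iω) ≥ 1` for every `ω > 0`; in particular for `P = φ_{a₂,b₂}` and
`Q = φ_{a₁,b₁}` under the restrictions (T3₁), (T3₂). -/
theorem stmt_3 (α β : ℝ) (hα : α ∈ Set.Ioo (0:ℝ) 1) (hβ : 0 < β) :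
    (∀ a b : ℝ, 0 ≤ a → 0 ≤ b → a ≥ 2 * b * Ctan α β →
      ∀ ω : ℝ, 0 < ω → 1 ≤ (phi α β a b (Complex.I * (ω : ℂ))).re) ∧
    (∀ a₁ a₂ b₁ b₂ : ℝ, 0 ≤ a₁ → 0 ≤ a₂ → 0 ≤ b₁ → 0 ≤ b₂ →
      a₁ ≥ 2 * b₁ * Ctan α β → a₂ ≥ 2 * b₂ * Ctan α β →
      ∀ ω : ℝ, 0 < ω →
        1 ≤ (phi α β a₂ b₂ (Complex.I * (ω : ℂ))).re ∧
        1 ≤ (phi α β a₁ b₁ (Complex.I * (ω : ℂ))).re) := by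
  have main : ∀ a b : ℝ, 0 ≤ a → 0 ≤ b → a ≥ 2 * b * Ctan α β →
      ∀ ω : ℝ, 0 < ω → 1 ≤ (phi α β a b (Complex.I * (ω : ℂ))).re := by
    intro a b ha hb hab ω hω
    have r0 : ((Complex.I * (ω:ℂ)) ^ ((α:ℂ))).re
        = Real.exp (α * Real.log ω) * Real.cos (α * (Real.pi/2)) := by
      have h := cpow_re ω α 0 hω
      simpa using h
    have r1 := cpow_re ω α β hω
    have r2 : ((Complex.I * (ω:ℂ)) ^ ((α:ℂ) - Complex.I * (β:ℂ))).re
        = Real.exp (α * Real.log ω + β * (Real.pi/2)) *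
          Real.cos (α * (Real.pi/2) - β * Real.log ω) := by
      have h := cpow_re ω α (-β) hω
      rw [show (α:ℂ) + Complex.I * (((-β:ℝ)):ℂ) = (α:ℂ) - Complex.I * (β:ℂ) by
        push_cast; ring] at h
      rw [h]
      congr 1
      · congr 1; ring
      · congr 1; ring
    rw [phi]
    simp only [Complex.add_re, Complex.one_re, Complex.re_ofReal_mul, r0, r1, r2]
    have hk := key α β a b (β * Real.log ω) hα hβ hb hab
    have hE := Real.exp_pos (α * Real.log ω)
    have h3 : Real.exp (α * Real.log ω - β * (Real.pi/2))
        = Real.exp (α * Real.log ω) * Real.exp (-(β * (Real.pi/2))) := by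
      rw [← Real.exp_add]; ring_nf
    have h4 : Real.exp (α * Real.log ω + β * (Real.pi/2))
        = Real.exp (α * Real.log ω) * Real.exp (β * (Real.pi/2)) := by
      rw [← Real.exp_add]
    rw [h3, h4]
    nlinarith [mul_nonneg hE.le hk]
  exact ⟨main, fun a₁ a₂ b₁ b₂ _ _ _ _ h₁ h₂ ω hω =>
    ⟨main a₂ b₂ ‹_› ‹_› h₂ ω hω, main a₁ b₁ ‹_› ‹_› h₁ ω hω⟩⟩
end

section
/- Let α ∈ (0,1), β > 0 and a₁, a₂, b₁, b₂ ∈ ℝ. Then for every ω > 0, with τ = β·ln ω: Im P(iω)·Re Q(iω) − Re P(iω)·Im Q(iω) = (a₂ − a₁)·ω^α·sin(απ/2) + 2(b₂ − b₁)·ω^α·g(τ, π/2) + 2(a₂b₁ − a₁b₂)·ω^{2α}·sin(τ)·sinh(βπ/2). -/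
/-- `g(τ,φ) = cos τ · sin(αφ) · cosh(βφ) − sin τ · cos(αφ) · sinh(βφ)`. -/
noncomputable def g (α β τ φ : ℝ) : ℝ :=
  Real.cos τ * Real.sin (α * φ) * Real.cosh (β * φ) -
    Real.sin τ * Real.cos (α * φ) * Real.sinh (β * φ)

lemma logIω (ω : ℝ) (hω : 0 < ω) :
    Complex.log (Complex.I * (ω:ℂ)) = (Real.log ω : ℂ) + (Real.pi/2 : ℝ) * Complex.I := by
  have habs : ‖Complex.I * (ω:ℂ)‖ = ω := by simp [abs_of_pos hω]
  have harg : Complex.arg (Complex.I * (ω:ℂ)) = Real.pi/2 := by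
    rw [mul_comm, Complex.arg_real_mul _ hω, Complex.arg_I]
  apply Complex.ext <;> simp [Complex.log_re, Complex.log_im, habs, harg]

lemma key_s4 (ω x y : ℝ) (hω : 0 < ω) :
    ((Complex.I * (ω:ℂ)) ^ ((x:ℂ) + (y:ℂ) * Complex.I)).re =
      Real.exp (x * Real.log ω - y * (Real.pi/2)) * Real.cos (x * (Real.pi/2) + y * Real.log ω) ∧
    ((Complex.I * (ω:ℂ)) ^ ((x:ℂ) + (y:ℂ) * Complex.I)).im =
      Real.exp (x * Real.log ω - y * (Real.pi/2)) * Real.sin (x * (Real.pi/2) + y * Real.log ω) := by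
  have hs : (Complex.I * (ω:ℂ)) ≠ 0 :=
    mul_ne_zero Complex.I_ne_zero (by exact_mod_cast hω.ne')
  have hz : Complex.log (Complex.I * (ω:ℂ)) * ((x:ℂ) + (y:ℂ) * Complex.I) =
      ((x * Real.log ω - y * (Real.pi/2) : ℝ) : ℂ) +
        ((x * (Real.pi/2) + y * Real.log ω : ℝ) : ℂ) * Complex.I := by
    rw [logIω ω hω]
    apply Complex.ext <;>
      simp [Complex.add_re, Complex.add_im, Complex.mul_re, Complex.mul_im] <;> ring
  rw [Complex.cpow_def_of_ne_zero hs, hz]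
  constructor <;> simp [Complex.exp_re, Complex.exp_im]

/-- With `P = φ_{a₂,b₂}` and `Q = φ_{a₁,b₁}`, for every `ω > 0` and `τ = β·ln ω`:
`Im P(iω)·Re Q(iω) − Re P(iω)·Im Q(iω) = (a₂−a₁)·ω^α·sin(απ/2) + 2(b₂−b₁)·ω^α·g(τ,π/2)
 + 2(a₂b₁−a₁b₂)·ω^{2α}·sin τ·sinh(βπ/2)`. -/
theorem stmt_4 (α β a₁ a₂ b₁ b₂ : ℝ) (hα : α ∈ Set.Ioo (0:ℝ) 1) (hβ : 0 < β) :
    ∀ ω : ℝ, 0 < ω →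
      (phi α β a₂ b₂ (Complex.I * (ω : ℂ))).im * (phi α β a₁ b₁ (Complex.I * (ω : ℂ))).re -
        (phi α β a₂ b₂ (Complex.I * (ω : ℂ))).re * (phi α β a₁ b₁ (Complex.I * (ω : ℂ))).im =
      (a₂ - a₁) * ω ^ α * Real.sin (α * (Real.pi / 2)) +
        2 * (b₂ - b₁) * ω ^ α * g α β (β * Real.log ω) (Real.pi / 2) +
        2 * (a₂ * b₁ - a₁ * b₂) * ω ^ (2 * α) * Real.sin (β * Real.log ω) *
          Real.sinh (β * (Real.pi / 2)) := by
  intro ω hω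
  have e1 : ((α:ℝ):ℂ) = ((α:ℂ) + ((0:ℝ):ℂ) * Complex.I) := by simp
  have e2 : (α:ℂ) + Complex.I * (β:ℂ) = (α:ℂ) + ((β:ℝ):ℂ) * Complex.I := by ring
  have e3 : (α:ℂ) - Complex.I * (β:ℂ) = (α:ℂ) + (((-β:ℝ)):ℂ) * Complex.I := by
    push_cast; ring
  obtain ⟨r1, i1⟩ := key_s4 ω α 0 hω
  obtain ⟨r2, i2⟩ := key_s4 ω α β hω
  obtain ⟨r3, i3⟩ := key_s4 ω α (-β) hω
  simp only [phi, e2, e3]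
  rw [show ((α:ℝ):ℂ) = ((α:ℂ) + ((0:ℝ):ℂ) * Complex.I) from e1] at r2 i2 r3 i3 ⊢
  simp only [Complex.add_re, Complex.add_im, Complex.mul_re, Complex.mul_im,
    Complex.one_re, Complex.one_im, Complex.ofReal_re, Complex.ofReal_im,
    r1, i1, r2, i2, r3, i3]
  rw [g, Real.rpow_def_of_pos hω, Real.rpow_def_of_pos hω, Real.cosh_eq, Real.sinh_eq]
  rw [show Real.log ω * (2*α) = α * Real.log ω + α * Real.log ω from by ring, Real.exp_add,
    mul_comm (Real.log ω) α]
  simp only [Real.cos_add, Real.sin_add, neg_mul, Real.cos_neg, Real.sin_neg,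
    sub_neg_eq_add, Real.exp_add, Real.exp_sub, Real.exp_neg, zero_mul, mul_zero,
    sub_zero, add_zero, Real.cos_zero, Real.sin_zero, mul_one, mul_neg, neg_neg]
  have hpy : Real.sin (α*(Real.pi/2))^2 + Real.cos (α*(Real.pi/2))^2 = 1 :=
    Real.sin_sq_add_cos_sq _
  set R := Real.exp (α * Real.log ω) with hR
  set E := Real.exp (β * (Real.pi/2)) with hEdef
  set S := Real.sin (α * (Real.pi/2)) with hS
  set C := Real.cos (α * (Real.pi/2)) with hC
  set st := Real.sin (β * Real.log ω) with hst
  set ct := Real.cos (β * Real.log ω) with hct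
  have hE : E ≠ 0 := by rw [hEdef]; exact Real.exp_ne_zero _
  field_simp
  linear_combination (a₂*b₁ - a₁*b₂) * R^2 * st * (E^3 - E) * hpy
end

section
/- Let α ∈ (0,1), β > 0 and a₁, a₂, b₁, b₂ ≥ 0. If Im P(iω)·Re Q(iω) − Re P(iω)·Im Q(iω) ≥ 0 for every ω > 0, then a₂b₁ = a₁b₂. (Necessity of the thermodynamical restriction (T1).) -/
open Real Complex

lemma logIm (ω : ℝ) (hω : 0 < ω) : Complex.log (Complex.I * ω) = (Real.log ω : ℂ) + Complex.I * ((π:ℝ)/2 : ℝ) := by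
  rw [mul_comm, Complex.log]
  simp [Complex.norm_real, Real.norm_eq_abs, abs_of_pos hω, Complex.arg_real_mul _ hω, Complex.arg_I]
  ring

lemma cpowIm (ω : ℝ) (hω : 0 < ω) (z : ℂ) :
    (Complex.I * ω) ^ z = Complex.exp (((Real.log ω : ℂ) + Complex.I * ((π:ℝ)/2 : ℝ)) * z) := by
  rw [Complex.cpow_def_of_ne_zero, logIm ω hω]
  intro hz
  have : (Complex.I * ω).im = 0 := by rw [hz]; simp
  simp [Complex.mul_im] at this
  linarith

lemma phi_re (α β a b L : ℝ) :
    (phi α β a b (Complex.I * (Real.exp L : ℝ))).re =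
      1 + a * Real.exp (α*L) * Real.cos (α*π/2)
        + b * (Real.exp (α*L - β*(π/2)) * Real.cos (β*L + α*π/2)
             + Real.exp (α*L + β*(π/2)) * Real.cos (α*π/2 - β*L)) := by
  have he : (0:ℝ) < Real.exp L := Real.exp_pos L
  unfold phi
  rw [cpowIm _ he, cpowIm _ he, cpowIm _ he, Real.log_exp]
  simp [Complex.exp_re, Complex.exp_im, Complex.add_re, Complex.add_im, Complex.mul_re,
    Complex.mul_im, Complex.ofReal_re, Complex.ofReal_im, Complex.I_re, Complex.I_im]
  ring_nf

lemma phi_im (α β a b L : ℝ) :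
    (phi α β a b (Complex.I * (Real.exp L : ℝ))).im =
      a * Real.exp (α*L) * Real.sin (α*π/2)
        + b * (Real.exp (α*L - β*(π/2)) * Real.sin (β*L + α*π/2)
             + Real.exp (α*L + β*(π/2)) * Real.sin (α*π/2 - β*L)) := by
  have he : (0:ℝ) < Real.exp L := Real.exp_pos L
  unfold phi
  rw [cpowIm _ he, cpowIm _ he, cpowIm _ he, Real.log_exp]
  simp [Complex.exp_re, Complex.exp_im, Complex.add_re, Complex.add_im, Complex.mul_re,
    Complex.mul_im, Complex.ofReal_re, Complex.ofReal_im, Complex.I_re, Complex.I_im]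
  ring_nf

lemma claim (α β a₁ a₂ b₁ b₂ ε : ℝ) (hβ : 0 < β) (hε : ε = 1 ∨ ε = -1)
    (h : ∀ ω : ℝ, 0 < ω →
      0 ≤ (phi α β a₂ b₂ (Complex.I * (ω : ℂ))).im * (phi α β a₁ b₁ (Complex.I * (ω : ℂ))).re -
        (phi α β a₂ b₂ (Complex.I * (ω : ℂ))).re * (phi α β a₁ b₁ (Complex.I * (ω : ℂ))).im)
    (n : ℕ) :
    0 ≤ ((a₂-a₁)*Real.sin (α*π/2)
          - ε*(b₂-b₁)*(Real.exp (β*(π/2)) - Real.exp (-(β*(π/2))))*Real.cos (α*π/2))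
        + Real.exp (α * ((ε*(π/2) + 2*π*n)/β)) *
            (ε*(Real.exp (β*(π/2)) - Real.exp (-(β*(π/2))))*(a₂*b₁ - a₁*b₂)) := by
  set L : ℝ := (ε*(π/2) + 2*π*n)/β with hL
  have hβL : β * L = ε*(π/2) + 2*π*n := by
    rw [hL]; field_simp
  have hω := h (Real.exp L) (Real.exp_pos L)
  rw [phi_re, phi_im, phi_re, phi_im] at hω
  have hc1 : Real.cos (β*L + α*π/2) = -ε * Real.sin (α*π/2) := by
    rcases hε with hε | hε <;> subst hε
    · rw [show β*L + α*π/2 = (α*π/2 + π/2) + n*(2*π) from by rw [hβL]; ring,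
        Real.cos_add_nat_mul_two_pi, Real.cos_add_pi_div_two]; ring
    · rw [show β*L + α*π/2 = (α*π/2 - π/2) + n*(2*π) from by rw [hβL]; ring,
        Real.cos_add_nat_mul_two_pi, Real.cos_sub_pi_div_two]; ring
  have hs1 : Real.sin (β*L + α*π/2) = ε * Real.cos (α*π/2) := by
    rcases hε with hε | hε <;> subst hε
    · rw [show β*L + α*π/2 = (α*π/2 + π/2) + n*(2*π) from by rw [hβL]; ring,
        Real.sin_add_nat_mul_two_pi, Real.sin_add_pi_div_two]; ring
    · rw [show β*L + α*π/2 = (α*π/2 - π/2) + n*(2*π) from by rw [hβL]; ring,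
        Real.sin_add_nat_mul_two_pi, Real.sin_sub_pi_div_two]; ring
  have hc2 : Real.cos (α*π/2 - β*L) = ε * Real.sin (α*π/2) := by
    rcases hε with hε | hε <;> subst hε
    · rw [show α*π/2 - β*L = (α*π/2 - π/2) - n*(2*π) from by rw [hβL]; ring,
        Real.cos_sub_nat_mul_two_pi, Real.cos_sub_pi_div_two]; ring
    · rw [show α*π/2 - β*L = (α*π/2 + π/2) - n*(2*π) from by rw [hβL]; ring,
        Real.cos_sub_nat_mul_two_pi, Real.cos_add_pi_div_two]; ring
  have hs2 : Real.sin (α*π/2 - β*L) = -ε * Real.cos (α*π/2) := by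
    rcases hε with hε | hε <;> subst hε
    · rw [show α*π/2 - β*L = (α*π/2 - π/2) - n*(2*π) from by rw [hβL]; ring,
        Real.sin_sub_nat_mul_two_pi, Real.sin_sub_pi_div_two]; ring
    · rw [show α*π/2 - β*L = (α*π/2 + π/2) - n*(2*π) from by rw [hβL]; ring,
        Real.sin_sub_nat_mul_two_pi, Real.sin_add_pi_div_two]; ring
  have he1 : Real.exp (α*L - β*(π/2)) = Real.exp (α*L) * Real.exp (-(β*(π/2))) := by
    rw [← Real.exp_add]; ring_nf
  have he2 : Real.exp (α*L + β*(π/2)) = Real.exp (α*L) * Real.exp (β*(π/2)) := by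
    rw [← Real.exp_add]
  rw [hc1, hs1, hc2, hs2, he1, he2] at hω
  have hid : (a₂ * Real.exp (α*L) * Real.sin (α*π/2)
        + b₂ * (Real.exp (α*L) * Real.exp (-(β*(π/2))) * (ε * Real.cos (α*π/2))
             + Real.exp (α*L) * Real.exp (β*(π/2)) * (-ε * Real.cos (α*π/2)))) *
      (1 + a₁ * Real.exp (α*L) * Real.cos (α*π/2)
        + b₁ * (Real.exp (α*L) * Real.exp (-(β*(π/2))) * (-ε * Real.sin (α*π/2))
             + Real.exp (α*L) * Real.exp (β*(π/2)) * (ε * Real.sin (α*π/2)))) -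
      (1 + a₂ * Real.exp (α*L) * Real.cos (α*π/2)
        + b₂ * (Real.exp (α*L) * Real.exp (-(β*(π/2))) * (-ε * Real.sin (α*π/2))
             + Real.exp (α*L) * Real.exp (β*(π/2)) * (ε * Real.sin (α*π/2)))) *
      (a₁ * Real.exp (α*L) * Real.sin (α*π/2)
        + b₁ * (Real.exp (α*L) * Real.exp (-(β*(π/2))) * (ε * Real.cos (α*π/2))
             + Real.exp (α*L) * Real.exp (β*(π/2)) * (-ε * Real.cos (α*π/2))))
      = Real.exp (α*L) * (((a₂-a₁)*Real.sin (α*π/2)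
          - ε*(b₂-b₁)*(Real.exp (β*(π/2)) - Real.exp (-(β*(π/2))))*Real.cos (α*π/2))
        + Real.exp (α*L) *
            (ε*(Real.exp (β*(π/2)) - Real.exp (-(β*(π/2))))*(a₂*b₁ - a₁*b₂))) := by
    have hsc := Real.sin_sq_add_cos_sq (α*π/2)
    linear_combination (Real.exp (α*L)^2 * ε * (Real.exp (β*(π/2)) - Real.exp (-(β*(π/2)))) * (a₂*b₁ - a₁*b₂)) * hsc
  rw [hid] at hω
  exact nonneg_of_mul_nonneg_right hω (Real.exp_pos (α*L))

lemma aux_nonneg (α β e c x : ℝ) (hα : 0 < α) (hβ : 0 < β)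
    (h : ∀ n : ℕ, 0 ≤ c + Real.exp (α * ((e + 2*π*n)/β)) * x) : 0 ≤ x := by
  by_contra hx
  push_neg at hx
  have hpi := Real.pi_pos
  have hq : 0 < α/β * (2*π) := by positivity
  obtain ⟨n, hn⟩ := exists_nat_gt ((c / (-x) - α/β * e) / (α/β * (2*π)))
  have hn' : c / (-x) - α/β * e < n * (α/β * (2*π)) := by
    rw [div_lt_iff₀ hq] at hn; linarith
  have heq : α * ((e + 2*π*n)/β) = α/β * e + n * (α/β * (2*π)) := by
    field_simp
  have ht : c / (-x) < α * ((e + 2*π*n)/β) := by rw [heq]; linarith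
  have hexp : α * ((e + 2*π*n)/β) < Real.exp (α * ((e + 2*π*n)/β)) := by
    have := Real.add_one_le_exp (α * ((e + 2*π*n)/β)); linarith
  have hnx : 0 < -x := by linarith
  have hr : c / (-x) < Real.exp (α * ((e + 2*π*n)/β)) := lt_trans ht hexp
  rw [div_lt_iff₀ hnx] at hr
  have := h n
  nlinarith


/-- Necessity of the thermodynamical restriction (T1): with `P = φ_{a₂,b₂}`, `Q = φ_{a₁,b₁}`
and `a₁, a₂, b₁, b₂ ≥ 0`, if `Im P(iω)·Re Q(iω) − Re P(iω)·Im Q(iω) ≥ 0` for every `ω > 0`,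
then `a₂b₁ = a₁b₂`. -/
theorem stmt_5 (α β a₁ a₂ b₁ b₂ : ℝ) (hα : α ∈ Set.Ioo (0:ℝ) 1) (hβ : 0 < β)
    (ha₁ : 0 ≤ a₁) (ha₂ : 0 ≤ a₂) (hb₁ : 0 ≤ b₁) (hb₂ : 0 ≤ b₂)
    (h : ∀ ω : ℝ, 0 < ω →
      0 ≤ (phi α β a₂ b₂ (Complex.I * (ω : ℂ))).im * (phi α β a₁ b₁ (Complex.I * (ω : ℂ))).re -
        (phi α β a₂ b₂ (Complex.I * (ω : ℂ))).re * (phi α β a₁ b₁ (Complex.I * (ω : ℂ))).im) :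
    a₂ * b₁ = a₁ * b₂ := by

  have hS : 0 < Real.exp (β*(π/2)) - Real.exp (-(β*(π/2))) := by
    have : -(β*(π/2)) < β*(π/2) := by nlinarith [Real.pi_pos]
    linarith [Real.exp_lt_exp.mpr this]
  have hpos := aux_nonneg α β (1*(π/2)) _ _ hα.1 hβ
    (fun n => claim α β a₁ a₂ b₁ b₂ 1 hβ (Or.inl rfl) h n)
  have hneg := aux_nonneg α β ((-1)*(π/2)) _ _ hα.1 hβ
    (fun n => claim α β a₁ a₂ b₁ b₂ (-1) hβ (Or.inr rfl) h n)
  have hSD : (Real.exp (β*(π/2)) - Real.exp (-(β*(π/2)))) * (a₂*b₁ - a₁*b₂) = 0 := by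
    nlinarith [hpos, hneg]
  have hD : a₂*b₁ - a₁*b₂ = 0 := by
    rcases mul_eq_zero.mp hSD with h' | h'
    · linarith
    · exact h'
  linarith
end

section
/- Let α ∈ (0,1) and β > 0. The function φ ↦ cosh(βφ)·√(1 + tan²(αφ)·tanh²(βφ)) is strictly increasing on [0, π/2]; in particular, cosh(βφ)·√(1 + tan²(αφ)·tanh²(βφ)) < cosh(βπ/2)·√(1 + tan²(απ/2)·tanh²(βπ/2)) for every φ ∈ [0, π/2). -/
lemma cosh_mul_tanh (x : ℝ) : Real.cosh x * Real.tanh x = Real.sinh x := by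
  rw [Real.tanh_eq_sinh_div_cosh]
  field_simp

lemma rewrite_f (t a : ℝ) :
    Real.cosh a * Real.sqrt (1 + (Real.tan t * Real.tanh a) ^ 2) =
      Real.sqrt (Real.cosh a ^ 2 + Real.tan t ^ 2 * Real.sinh a ^ 2) := by
  have h := cosh_mul_tanh a
  have heq : Real.cosh a ^ 2 + Real.tan t ^ 2 * Real.sinh a ^ 2 =
      Real.cosh a ^ 2 * (1 + (Real.tan t * Real.tanh a) ^ 2) := by rw [← h]; ring
  rw [heq, Real.sqrt_mul (sq_nonneg _), Real.sqrt_sq (Real.cosh_pos a).le]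

/-- For `α ∈ (0,1)` and `β > 0`, the function
`φ ↦ cosh(βφ)·√(1 + tan²(αφ)·tanh²(βφ))` is strictly increasing on `[0, π/2]`;
in particular its value at any `φ ∈ [0, π/2)` is strictly smaller than its value at `π/2`. -/
theorem stmt_11 (α β : ℝ) (hα : α ∈ Set.Ioo (0:ℝ) 1) (hβ : 0 < β) :
    StrictMonoOn
      (fun φ : ℝ => Real.cosh (β * φ) *
        Real.sqrt (1 + (Real.tan (α * φ) * Real.tanh (β * φ)) ^ 2))
      (Set.Icc 0 (Real.pi / 2)) ∧
    ∀ φ ∈ Set.Ico (0:ℝ) (Real.pi / 2),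
      Real.cosh (β * φ) * Real.sqrt (1 + (Real.tan (α * φ) * Real.tanh (β * φ)) ^ 2) <
        Real.cosh (β * (Real.pi / 2)) *
          Real.sqrt (1 + (Real.tan (α * (Real.pi / 2)) * Real.tanh (β * (Real.pi / 2))) ^ 2) := by
  obtain ⟨hα0, hα1⟩ := hα
  have hπ := Real.pi_pos
  have hmono : StrictMonoOn
      (fun φ : ℝ => Real.cosh (β * φ) *
        Real.sqrt (1 + (Real.tan (α * φ) * Real.tanh (β * φ)) ^ 2))
      (Set.Icc 0 (Real.pi / 2)) := by
    intro x hx y hy hxy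
    simp only
    rw [rewrite_f, rewrite_f]
    obtain ⟨hx0, hx2⟩ := hx
    obtain ⟨hy0, hy2⟩ := hy
    -- bounds for tan
    have hαy : α * y < Real.pi / 2 := by
      calc α * y ≤ α * (Real.pi / 2) := by nlinarith
        _ < Real.pi / 2 := by nlinarith
    have hαx : α * x < Real.pi / 2 := lt_of_le_of_lt (by nlinarith) hαy
    have htan_nonneg : 0 ≤ Real.tan (α * x) :=
      Real.tan_nonneg_of_nonneg_of_le_pi_div_two (by positivity) hαx.le
    have htan_le : Real.tan (α * x) ≤ Real.tan (α * y) :=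
      (Real.tan_lt_tan_of_nonneg_of_lt_pi_div_two (by positivity) hαy
        (by nlinarith)).le
    have hsinh_nonneg : 0 ≤ Real.sinh (β * x) := Real.sinh_nonneg_iff.2 (by positivity)
    have hsinh_le : Real.sinh (β * x) ≤ Real.sinh (β * y) := by
      rw [Real.sinh_le_sinh]; nlinarith
    have hcosh_lt : Real.cosh (β * x) < Real.cosh (β * y) := by
      rw [Real.cosh_lt_cosh]
      rw [abs_of_nonneg (by positivity), abs_of_nonneg (by positivity)]
      nlinarith
    apply Real.sqrt_lt_sqrt
    · positivity
    · have h1 : Real.cosh (β * x) ^ 2 < Real.cosh (β * y) ^ 2 := by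
        have := Real.cosh_pos (β * x)
        nlinarith
      have h2 : Real.tan (α * x) ^ 2 * Real.sinh (β * x) ^ 2 ≤
          Real.tan (α * y) ^ 2 * Real.sinh (β * y) ^ 2 := by
        apply mul_le_mul
        · exact pow_le_pow_left₀ htan_nonneg htan_le 2
        · exact pow_le_pow_left₀ hsinh_nonneg hsinh_le 2
        · positivity
        · positivity
      linarith
  refine ⟨hmono, fun φ hφ => ?_⟩
  exact hmono ⟨hφ.1, hφ.2.le⟩ ⟨by positivity, le_refl _⟩ hφ.2
end

section
/- Let α ∈ (0,1), β > 0 and a₁, a₂ > 0, b₁, b₂ > 0 satisfy a₂b₁ = a₁b₂ (restriction (T1)) and a_i ≥ 2b_i·cosh(βπ/2)·√(1 + tan²(απ/2)·tanh²(βπ/2)) for i = 1,2 (restrictions (T3₁), (T3₂)). Then for every complex s ≠ 0 with Re s ≥ 0, Re( P(s) · conj(Q(s)) ) ≥ 1 > 0. (In particular, wherever Q(s) ≠ 0, the real part of Ẽ(s) = P(s)/Q(s) is positive, hence Re M²(s) > 0 for M²(s) = Q(s)/P(s).) -/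
open Real Complex in
lemma Ctan_nonneg (α β : ℝ) : 0 ≤ Ctan α β := by
  unfold Ctan; positivity

lemma cs_aux (A B cx sx : ℝ) (hpyth : sx^2 + cx^2 = 1) :
    (A*cx + B*sx)^2 ≤ A^2 + B^2 := by
  nlinarith [sq_nonneg (A*sx - B*cx)]

open Real in
set_option maxHeartbeats 1000000 in
lemma bound_aux (α β θ x : ℝ) (hα : α ∈ Set.Ioo (0:ℝ) 1) (hβ : 0 < β) (hθ : |θ| ≤ π/2) :
    |2*(Real.cosh (β*θ)*Real.cos (α*θ)*Real.cos x + Real.sinh (β*θ)*Real.sin (α*θ)*Real.sin x)|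
      ≤ 2 * Ctan α β * Real.cos (α*θ) := by
  obtain ⟨hα0, hα1⟩ := hα
  have hπ : (0:ℝ) < π := Real.pi_pos
  have htabs : |α*θ| < π/2 := by
    rw [abs_mul, abs_of_pos hα0]
    calc α * |θ| ≤ α * (π/2) := by nlinarith [abs_nonneg θ]
      _ < 1 * (π/2) := by nlinarith
      _ = π/2 := by ring
  obtain ⟨htl, htr⟩ := abs_lt.mp htabs
  have hc : 0 < Real.cos (α*θ) := Real.cos_pos_of_mem_Ioo ⟨by linarith, htr⟩
  set T := Real.tan (α*(π/2)) with hT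
  set H := Real.tanh (β*(π/2)) with hH
  set Ch := Real.cosh (β*(π/2)) with hCh
  have hChpos : 0 < Ch := Real.cosh_pos _
  have hcoshv0 : 0 < Real.cosh (β*θ) := Real.cosh_pos _
  have hcoshv : Real.cosh (β*θ) ≤ Ch := by
    rw [hCh, Real.cosh_le_cosh, abs_mul, abs_mul, abs_of_pos hβ,
      abs_of_pos (by positivity : (0:ℝ) < π/2)]
    nlinarith
  have hHnn : 0 ≤ H := by
    rw [hH, Real.tanh_eq_sinh_div_cosh]
    have h0 : Real.sinh 0 ≤ Real.sinh (β*(π/2)) := Real.sinh_le_sinh.mpr (by positivity)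
    rw [Real.sinh_zero] at h0
    have := Real.cosh_pos (β*(π/2))
    positivity
  have hsinhCH : Real.sinh (β*(π/2)) = Ch * H := by
    rw [hH, hCh, Real.tanh_eq_sinh_div_cosh, mul_div_cancel₀]
    exact (Real.cosh_pos _).ne'
  have hsinhv : |Real.sinh (β*θ)| ≤ Ch * H := by
    rw [Real.abs_sinh, ← hsinhCH, Real.sinh_le_sinh, abs_mul, abs_of_pos hβ]
    nlinarith
  have hcoshalf : 0 < Real.cos (α*(π/2)) :=
    Real.cos_pos_of_mem_Ioo ⟨by nlinarith, by nlinarith⟩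
  have hsint : |Real.sin (α*θ)| ≤ T * Real.cos (α*θ) := by
    have habs_sin : |Real.sin (α*θ)| = Real.sin |α*θ| := by
      rcases le_or_gt 0 (α*θ) with h | h
      · rw [abs_of_nonneg h, abs_of_nonneg (Real.sin_nonneg_of_nonneg_of_le_pi h (by linarith))]
      · rw [abs_of_neg h, Real.sin_neg, abs_of_nonpos
          (Real.sin_nonpos_of_nonpos_of_neg_pi_le (le_of_lt h) (by linarith))]
    have hcos_abs : Real.cos |α*θ| = Real.cos (α*θ) := Real.cos_abs _
    have key : Real.sin |α*θ| * Real.cos (α*(π/2)) ≤ Real.sin (α*(π/2)) * Real.cos (α*θ) := by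
      have hle : |α*θ| ≤ α*(π/2) := by
        rw [abs_mul, abs_of_pos hα0]; nlinarith [abs_nonneg θ]
      have hs : Real.sin (|α*θ| - α*(π/2)) ≤ 0 :=
        Real.sin_nonpos_of_nonpos_of_neg_pi_le (by linarith)
          (by have := abs_nonneg (α*θ); nlinarith)
      rw [Real.sin_sub, hcos_abs] at hs
      linarith
    rw [habs_sin, hT, Real.tan_eq_sin_div_cos, div_mul_eq_mul_div, le_div_iff₀ hcoshalf]
    linarith
  have hTc : 0 ≤ T * Real.cos (α*θ) := le_trans (abs_nonneg _) hsint
  set A := Real.cosh (β*θ) * Real.cos (α*θ) with hA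
  set B := Real.sinh (β*θ) * Real.sin (α*θ) with hB
  set c := Real.cos (α*θ)
  have hCtsq : (Ctan α β)^2 = Ch^2 * (1 + (T*H)^2) := by
    unfold Ctan
    rw [mul_pow, Real.sq_sqrt (by positivity)]
  have hA2 : A^2 ≤ (Ch * c)^2 := by
    have hcc : Real.cosh (β*θ)^2 ≤ Ch^2 := pow_le_pow_left₀ hcoshv0.le hcoshv 2
    have : A^2 = Real.cosh (β*θ)^2 * c^2 := by rw [hA]; ring
    nlinarith [sq_nonneg c]
  have hB2 : B^2 ≤ (Ch * H * (T * c))^2 := by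
    have h1 : |Real.sinh (β*θ)|^2 ≤ (Ch*H)^2 :=
      pow_le_pow_left₀ (abs_nonneg _) hsinhv 2
    have h2 : |Real.sin (α*θ)|^2 ≤ (T*c)^2 :=
      pow_le_pow_left₀ (abs_nonneg _) hsint 2
    have hBe : B^2 = |Real.sinh (β*θ)|^2 * |Real.sin (α*θ)|^2 := by
      rw [hB, sq_abs, sq_abs]; ring
    calc B^2 = |Real.sinh (β*θ)|^2 * |Real.sin (α*θ)|^2 := hBe
      _ ≤ (Ch*H)^2 * (T*c)^2 := by
          apply mul_le_mul h1 h2 (sq_nonneg _) (sq_nonneg _)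
      _ = (Ch * H * (T * c))^2 := by ring
  have hstep1 : (A*Real.cos x + B*Real.sin x)^2 ≤ A^2 + B^2 :=
    cs_aux A B _ _ (Real.sin_sq_add_cos_sq x)
  have hstep2 : A^2 + B^2 ≤ (Ctan α β * c)^2 := by
    have : (Ch * c)^2 + (Ch * H * (T * c))^2 = (Ctan α β * c)^2 := by
      linear_combination (-(c^2)) * hCtsq
    linarith
  have hsq : (2*(A*Real.cos x + B*Real.sin x))^2 ≤ (2 * Ctan α β * c)^2 := by
    have e1 : (2*(A*Real.cos x + B*Real.sin x))^2 = 4 * (A*Real.cos x + B*Real.sin x)^2 := by ring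
    have e2 : (2 * Ctan α β * c)^2 = 4 * (Ctan α β * c)^2 := by ring
    rw [e1, e2]
    linarith
  calc |2*(A*Real.cos x + B*Real.sin x)|
      = Real.sqrt ((2*(A*Real.cos x + B*Real.sin x))^2) := (Real.sqrt_sq_eq_abs _).symm
    _ ≤ Real.sqrt ((2 * Ctan α β * c)^2) := Real.sqrt_le_sqrt hsq
    _ = 2 * Ctan α β * c := Real.sqrt_sq (by have := Ctan_nonneg α β; positivity)

/-- The non-constant part of `phi`. -/
noncomputable def psi (α β a b : ℝ) (s : ℂ) : ℂ :=
  (a : ℂ) * s ^ (α : ℂ) +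
    (b : ℂ) * (s ^ ((α : ℂ) + Complex.I * (β : ℂ)) + s ^ ((α : ℂ) - Complex.I * (β : ℂ)))

lemma phi_eq (α β a b : ℝ) (s : ℂ) : phi α β a b s = 1 + psi α β a b s := by
  rw [phi, psi]; ring

open Real Complex in
lemma psi_re_nonneg (α β a b : ℝ) (hα : α ∈ Set.Ioo (0:ℝ) 1) (hβ : 0 < β)
    (ha : 0 < a) (hb : 0 < b) (hT3 : a ≥ 2 * b * Ctan α β)
    (s : ℂ) (hs : s ≠ 0) (hre : 0 ≤ s.re) :
    0 ≤ (psi α β a b s).re := by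
  rw [psi]
  have hθ : |s.arg| ≤ π/2 := Complex.abs_arg_le_pi_div_two_iff.mpr hre
  set θ := s.arg with hθdef
  set ℓ := Real.log ‖s‖ with hℓ
  obtain ⟨hα0, hα1⟩ := hα
  have hπ : (0:ℝ) < π := Real.pi_pos
  have hc : 0 < Real.cos (α*θ) := by
    apply Real.cos_pos_of_mem_Ioo
    constructor
    · rcases abs_le.mp hθ with ⟨h1, h2⟩
      nlinarith [abs_nonneg θ, neg_abs_le θ]
    · rcases abs_le.mp hθ with ⟨h1, h2⟩
      nlinarith [le_abs_self θ]
  have hE := bound_aux α β θ (β*ℓ) ⟨hα0, hα1⟩ hβ hθ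
  set E := 2*(Real.cosh (β*θ)*Real.cos (α*θ)*Real.cos (β*ℓ) +
    Real.sinh (β*θ)*Real.sin (α*θ)*Real.sin (β*ℓ)) with hEdef
  have expfac : rexp (α*ℓ - β*θ) * Real.cos (α*θ + β*ℓ) + rexp (α*ℓ + β*θ) * Real.cos (α*θ - β*ℓ)
      = rexp (α*ℓ) * E := by
    rw [hEdef, Real.cosh_eq, Real.sinh_eq, Real.exp_sub, Real.exp_add, Real.exp_neg,
      Real.cos_add, Real.cos_sub]
    field_simp
    ring
  have hinner : 0 ≤ a * Real.cos (α*θ) + b * E := by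
    rcases abs_le.mp hE with ⟨h1, h2⟩
    nlinarith [hc.le, hb.le]
  have key : 0 ≤ a * (rexp (α*ℓ) * Real.cos (α*θ)) +
      b * (rexp (α*ℓ - β*θ) * Real.cos (α*θ + β*ℓ) + rexp (α*ℓ + β*θ) * Real.cos (α*θ - β*ℓ)) := by
    rw [expfac]
    have := mul_nonneg (Real.exp_nonneg (α*ℓ)) hinner
    nlinarith [this]
  rw [Complex.cpow_def_of_ne_zero hs, Complex.cpow_def_of_ne_zero hs,
    Complex.cpow_def_of_ne_zero hs]
  simp only [Complex.add_re, Complex.mul_re, Complex.mul_im, Complex.ofReal_re,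
    Complex.ofReal_im, Complex.exp_re, Complex.log_re, Complex.log_im, Complex.add_im,
    Complex.sub_re, Complex.sub_im, Complex.I_re, Complex.I_im, Complex.one_re,
    Complex.one_im, Complex.exp_im]
  rw [← hθdef, ← hℓ]
  ring_nf
  ring_nf at key
  convert key using 2 <;> ring_nf

lemma div_re_pos_of_one_le (P Q : ℂ) (h1 : 1 ≤ (P * (starRingEnd ℂ) Q).re) (hQ : Q ≠ 0) :
    0 < (P / Q).re := by
  rw [div_eq_mul_inv, Complex.inv_def, ← mul_assoc, mul_comm (P * (starRingEnd ℂ) Q) _,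
    Complex.re_ofReal_mul]
  have h2 : 0 < Complex.normSq Q := Complex.normSq_pos.mpr hQ
  positivity

/-- Under (T1) and (T3₁), (T3₂) with `a₁, a₂, b₁, b₂ > 0`: for every `s ≠ 0` with `Re s ≥ 0`,
`Re (P(s)·conj(Q(s))) ≥ 1 > 0`; in particular, wherever `Q(s) ≠ 0`, `Re (P/Q)(s) > 0`,
hence `Re M²(s) > 0` for `M² = Q/P` (wherever `P(s) ≠ 0`). -/
theorem stmt_14 (α β a₁ a₂ b₁ b₂ : ℝ) (hα : α ∈ Set.Ioo (0:ℝ) 1) (hβ : 0 < β)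
    (ha₁ : 0 < a₁) (ha₂ : 0 < a₂) (hb₁ : 0 < b₁) (hb₂ : 0 < b₂)
    (hT1 : a₂ * b₁ = a₁ * b₂)
    (hT3₁ : a₁ ≥ 2 * b₁ * Ctan α β) (hT3₂ : a₂ ≥ 2 * b₂ * Ctan α β) :
    ∀ s : ℂ, s ≠ 0 → 0 ≤ s.re →
      1 ≤ (phi α β a₂ b₂ s * (starRingEnd ℂ) (phi α β a₁ b₁ s)).re ∧
      (phi α β a₁ b₁ s ≠ 0 → 0 < (phi α β a₂ b₂ s / phi α β a₁ b₁ s).re) ∧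
      (phi α β a₂ b₂ s ≠ 0 → 0 < (phi α β a₁ b₁ s / phi α β a₂ b₂ s).re) := by
  intro s hs hre
  have hψ₁re : 0 ≤ (psi α β a₁ b₁ s).re := psi_re_nonneg α β a₁ b₁ hα hβ ha₁ hb₁ hT3₁ s hs hre
  have hψ₂re : 0 ≤ (psi α β a₂ b₂ s).re := psi_re_nonneg α β a₂ b₂ hα hβ ha₂ hb₂ hT3₂ s hs hre
  set ψ₁ := psi α β a₁ b₁ s with hψ₁def
  set ψ₂ := psi α β a₂ b₂ s with hψ₂def
  have hmain : 1 ≤ (phi α β a₂ b₂ s * (starRingEnd ℂ) (phi α β a₁ b₁ s)).re := by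
    have hrel : ψ₂ = ((a₂/a₁ : ℝ) : ℂ) * ψ₁ := by
      have hb : (a₁ : ℂ) * (b₂ : ℂ) = (a₂ : ℂ) * (b₁ : ℂ) := by
        have : a₁ * b₂ = a₂ * b₁ := hT1.symm
        exact_mod_cast congrArg (Complex.ofReal) this
      have ha₁' : (a₁ : ℂ) ≠ 0 := Complex.ofReal_ne_zero.mpr ha₁.ne'
      rw [hψ₂def, hψ₁def, psi, psi]
      push_cast
      field_simp
      linear_combination (s ^ ((α:ℂ) + Complex.I * (β:ℂ)) + s ^ ((α:ℂ) - Complex.I * (β:ℂ))) * hb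
    have hprod : phi α β a₂ b₂ s * (starRingEnd ℂ) (phi α β a₁ b₁ s)
        = 1 + (starRingEnd ℂ) ψ₁ + ψ₂ + ((a₂/a₁ : ℝ) : ℂ) * (ψ₁ * (starRingEnd ℂ) ψ₁) := by
      rw [phi_eq, phi_eq, ← hψ₁def, ← hψ₂def, map_add, map_one]
      rw [hrel]; ring
    rw [hprod]
    have hlast : (((a₂/a₁ : ℝ) : ℂ) * (ψ₁ * (starRingEnd ℂ) ψ₁)).re
        = (a₂/a₁) * Complex.normSq ψ₁ := by
      rw [Complex.mul_conj, ← Complex.ofReal_mul, Complex.ofReal_re]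
    simp only [Complex.add_re, Complex.one_re, Complex.conj_re, hlast]
    have h4 : 0 ≤ (a₂/a₁) * Complex.normSq ψ₁ := by
      have := Complex.normSq_nonneg ψ₁
      positivity
    linarith
  refine ⟨hmain, fun hQ => div_re_pos_of_one_le _ _ hmain hQ, fun hP => ?_⟩
  apply div_re_pos_of_one_le _ _ _ hP
  have hswap : phi α β a₁ b₁ s * (starRingEnd ℂ) (phi α β a₂ b₂ s)
      = (starRingEnd ℂ) (phi α β a₂ b₂ s * (starRingEnd ℂ) (phi α β a₁ b₁ s)) := by
    rw [map_mul, Complex.conj_conj, mul_comm]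
  rw [hswap, Complex.conj_re]
  exact hmain
end

section
/- Let α ∈ (0,1), β > 0 and let a > 0, b ≥ 0 satisfy a ≥ 2b·cosh(βπ/2)·√(1 + tan²(απ/2)·tanh²(βπ/2)). Then for every complex s with Re s ≥ 0 and s ≠ 0, Re φ_{a,b}(s) ≥ 1, while φ_{a,b}(0) = 1. -/
lemma cs_aux_s16 (X Y cv sv : ℝ) (h : sv ^ 2 + cv ^ 2 = 1) :
    (X * cv + Y * sv) ^ 2 ≤ X ^ 2 + Y ^ 2 := by
  nlinarith [sq_nonneg (X * sv - Y * cv)]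

set_option maxHeartbeats 1000000 in
open Real in
lemma key_bound (α β : ℝ) (hα0 : 0 < α) (hα1 : α < 1) (hβ : 0 < β)
    (t v : ℝ) (ht : |t| ≤ π / 2) :
    |Real.exp (-(β * t)) * Real.cos (α * t + v) + Real.exp (β * t) * Real.cos (α * t - v)|
      ≤ 2 * Ctan α β * Real.cos (α * t) := by
  have hπ : (0:ℝ) < π / 2 := by positivity
  have htabs : -(π/2) ≤ t ∧ t ≤ π/2 := abs_le.mp ht
  have hαt : |α * t| < π / 2 := by
    rw [abs_mul, abs_of_pos hα0]
    calc α * |t| ≤ α * (π/2) := by nlinarith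
    _ < π/2 := by nlinarith
  have hαt' := abs_lt.mp hαt
  have hc : 0 < Real.cos (α * t) :=
    Real.cos_pos_of_mem_Ioo ⟨hαt'.1, hαt'.2⟩
  set c := Real.cos (α * t) with hcdef
  set X := Real.cosh (β * t) * c with hX
  set Y := Real.sinh (β * t) * Real.sin (α * t) with hY
  have hE : Real.exp (-(β * t)) * Real.cos (α * t + v) + Real.exp (β * t) * Real.cos (α * t - v)
      = 2 * (X * Real.cos v + Y * Real.sin v) := by
    rw [hX, hY, hcdef, Real.cos_add, Real.cos_sub, Real.cosh_eq, Real.sinh_eq]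
    ring
  rw [hE]
  set P := β * (π/2) with hP
  set A := α * (π/2) with hA
  have hP0 : 0 < P := by positivity
  have hA2 : A < π/2 := by rw [hA]; nlinarith
  have hA0 : 0 < A := by positivity
  -- cosh bound
  have hcosh : Real.cosh (β * t) ≤ Real.cosh P := by
    rw [Real.cosh_le_cosh, abs_of_pos hP0, abs_mul, abs_of_pos hβ]
    nlinarith
  have hcosh1 : (1:ℝ) ≤ Real.cosh (β * t) := Real.one_le_cosh _
  -- sinh bound
  have hsinh : |Real.sinh (β * t)| ≤ Real.sinh P := by
    rw [Real.abs_sinh, Real.sinh_le_sinh, abs_mul, abs_of_pos hβ]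
    nlinarith
  -- tan bound
  have htan : |Real.tan (α * t)| ≤ Real.tan A := by
    have h1 : |Real.tan (α * t)| = Real.tan |α * t| := by
      rcases le_or_gt 0 (α * t) with h | h
      · rw [abs_of_nonneg h,
          abs_of_nonneg (Real.tan_nonneg_of_nonneg_of_le_pi_div_two h hαt'.2.le)]
      · have h2 : 0 ≤ Real.tan (-(α * t)) :=
          Real.tan_nonneg_of_nonneg_of_le_pi_div_two (by linarith) (by linarith [hαt'.1])
        rw [Real.tan_neg] at h2
        rw [abs_of_neg h, Real.tan_neg, abs_of_nonpos (by linarith)]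
    rw [h1]
    rcases eq_or_lt_of_le (show |α * t| ≤ A by rw [abs_mul, abs_of_pos hα0]; nlinarith) with h | h
    · rw [h]
    · exact (Real.tan_lt_tan_of_nonneg_of_lt_pi_div_two (abs_nonneg _) hA2 h).le
  -- sin via tan
  have hsin : Real.sin (α * t) = Real.tan (α * t) * c := by
    rw [Real.tan_eq_sin_div_cos, ← hcdef, div_mul_cancel₀]
    exact hc.ne'
  have hCsq : (Ctan α β)^2 = Real.cosh P ^ 2 + Real.sinh P ^2 * Real.tan A ^2 := by
    unfold Ctan
    rw [mul_pow, Real.sq_sqrt (by positivity), Real.tanh_eq_sinh_div_cosh, ← hP, ← hA]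
    have := (Real.cosh_pos P).ne'
    field_simp
  have hC0 : 0 ≤ Ctan α β := by
    unfold Ctan; positivity
  -- main square bound
  have hsq : X^2 + Y^2 ≤ (Ctan α β * c)^2 := by
    have hexp : (Ctan α β * c)^2
        = (Real.cosh P ^ 2 + Real.sinh P ^2 * Real.tan A ^2) * c^2 := by
      rw [mul_pow, hCsq]
    rw [hexp, hX, hY, hsin]
    have h1 : Real.cosh (β*t)^2 ≤ Real.cosh P^2 := by nlinarith
    have h2 : Real.sinh (β*t)^2 ≤ Real.sinh P^2 := by
      have := sq_abs (Real.sinh (β*t))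
      nlinarith [abs_nonneg (Real.sinh (β*t)), Real.sinh_pos_iff.mpr hP0]
    have h3 : Real.tan (α*t)^2 ≤ Real.tan A^2 := by
      have := sq_abs (Real.tan (α*t))
      nlinarith [abs_nonneg (Real.tan (α*t)), htan]
    have h4 : Real.sinh (β*t)^2 * Real.tan (α*t)^2 ≤ Real.sinh P^2 * Real.tan A^2 :=
      mul_le_mul h2 h3 (sq_nonneg _) (sq_nonneg _)
    nlinarith [sq_nonneg c]
  have hcs : (X * Real.cos v + Y * Real.sin v)^2 ≤ (Ctan α β * c)^2 :=
    le_trans (cs_aux_s16 X Y _ _ (Real.sin_sq_add_cos_sq v)) hsq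
  have habs : |X * Real.cos v + Y * Real.sin v| ≤ Ctan α β * c := by
    calc |X * Real.cos v + Y * Real.sin v|
        = Real.sqrt ((X * Real.cos v + Y * Real.sin v)^2) := (Real.sqrt_sq_eq_abs _).symm
      _ ≤ Real.sqrt ((Ctan α β * c)^2) := Real.sqrt_le_sqrt hcs
      _ = Ctan α β * c := Real.sqrt_sq (mul_nonneg hC0 hc.le)
  calc |2 * (X * Real.cos v + Y * Real.sin v)|
      = 2 * |X * Real.cos v + Y * Real.sin v| := by rw [abs_mul]; norm_num
    _ ≤ 2 * (Ctan α β * c) := by linarith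
    _ = 2 * Ctan α β * c := by ring

set_option maxHeartbeats 1000000 in
/-- If `a > 0`, `b ≥ 0` and `a ≥ 2b·cosh(βπ/2)·√(1 + tan²(απ/2)·tanh²(βπ/2))`, then for
every complex `s ≠ 0` with `Re s ≥ 0` one has `Re φ_{a,b}(s) ≥ 1`, while `φ_{a,b}(0) = 1`. -/
theorem stmt_16 (α β a b : ℝ) (hα : α ∈ Set.Ioo (0:ℝ) 1) (hβ : 0 < β)
    (ha : 0 < a) (hb : 0 ≤ b) (hT3 : a ≥ 2 * b * Ctan α β) :
    (∀ s : ℂ, 0 ≤ s.re → s ≠ 0 → 1 ≤ (phi α β a b s).re) ∧ phi α β a b 0 = 1 := by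
  obtain ⟨hα0, hα1⟩ := hα
  constructor
  · intro s hre hs
    have ht : |s.arg| ≤ Real.pi / 2 := Complex.abs_arg_le_pi_div_two_iff.mpr hre
    set t := s.arg with htdef
    set lr := Real.log ‖s‖ with hlrdef
    have hre1 : (s ^ (α:ℂ)).re = Real.exp (α * lr) * Real.cos (α * t) := by
      rw [Complex.cpow_def_of_ne_zero hs, Complex.exp_re]
      rw [show (Complex.log s * (α:ℂ)).re = α * lr by
            simp [Complex.mul_re, Complex.log_re, Complex.log_im, hlrdef]; ring]
      rw [show (Complex.log s * (α:ℂ)).im = α * t by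
            simp [Complex.mul_im, Complex.log_re, Complex.log_im, htdef, hlrdef]; ring]
    have hre2 : (s ^ ((α:ℂ) + Complex.I * (β:ℂ))).re
        = Real.exp (α * lr - β * t) * Real.cos (α * t + β * lr) := by
      rw [Complex.cpow_def_of_ne_zero hs, Complex.exp_re]
      rw [show (Complex.log s * ((α:ℂ) + Complex.I * (β:ℂ))).re = α * lr - β * t by
            simp [Complex.mul_re, Complex.log_re, Complex.log_im, hlrdef, htdef]; ring]
      rw [show (Complex.log s * ((α:ℂ) + Complex.I * (β:ℂ))).im = α * t + β * lr by
            simp [Complex.mul_im, Complex.log_re, Complex.log_im, hlrdef, htdef]; ring]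
    have hre3 : (s ^ ((α:ℂ) - Complex.I * (β:ℂ))).re
        = Real.exp (α * lr + β * t) * Real.cos (α * t - β * lr) := by
      rw [Complex.cpow_def_of_ne_zero hs, Complex.exp_re]
      rw [show (Complex.log s * ((α:ℂ) - Complex.I * (β:ℂ))).re = α * lr + β * t by
            simp [Complex.mul_re, Complex.log_re, Complex.log_im, hlrdef, htdef]; ring]
      rw [show (Complex.log s * ((α:ℂ) - Complex.I * (β:ℂ))).im = α * t - β * lr by
            simp [Complex.mul_im, Complex.log_re, Complex.log_im, hlrdef, htdef]; ring]
    have hphi : (phi α β a b s).re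
        = 1 + Real.exp (α * lr) * (a * Real.cos (α * t)
            + b * (Real.exp (-(β * t)) * Real.cos (α * t + β * lr)
                 + Real.exp (β * t) * Real.cos (α * t - β * lr))) := by
      simp only [phi, Complex.add_re, Complex.one_re, Complex.re_ofReal_mul,
        hre1, hre2, hre3]
      rw [show α * lr - β * t = α * lr + -(β * t) by ring, Real.exp_add, Real.exp_add]
      ring
    have hkb := key_bound α β hα0 hα1 hβ t (β * lr) ht
    set E := Real.exp (-(β * t)) * Real.cos (α * t + β * lr)
        + Real.exp (β * t) * Real.cos (α * t - β * lr) with hEdef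
    have hcos0 : 0 ≤ Real.cos (α * t) := by
      have htabs := abs_le.mp ht
      have : |α * t| < Real.pi / 2 := by
        rw [abs_mul, abs_of_pos hα0]
        have hπ : (0:ℝ) < Real.pi / 2 := by positivity
        calc α * |t| ≤ α * (Real.pi / 2) := by nlinarith
          _ < Real.pi / 2 := by nlinarith
      have h' := abs_lt.mp this
      exact (Real.cos_pos_of_mem_Ioo ⟨h'.1, h'.2⟩).le
    have h5 : 0 ≤ a * Real.cos (α * t) + b * E := by
      have h6 : b * |E| ≤ b * (2 * Ctan α β * Real.cos (α * t)) :=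
        mul_le_mul_of_nonneg_left hkb hb
      have h7 : -|E| ≤ E := neg_abs_le E
      nlinarith [mul_nonneg (sub_nonneg.mpr hT3) hcos0, mul_le_mul_of_nonneg_left h7 hb]
    rw [hphi]
    nlinarith [mul_nonneg (Real.exp_pos (α * lr)).le h5]
  · have h1 : (α:ℂ) ≠ 0 := by exact_mod_cast hα0.ne'
    have h2 : (α:ℂ) + Complex.I * (β:ℂ) ≠ 0 := by
      intro h
      rw [Complex.ext_iff] at h
      simp at h
      exact hα0.ne' h.1
    have h3 : (α:ℂ) - Complex.I * (β:ℂ) ≠ 0 := by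
      intro h
      rw [Complex.ext_iff] at h
      simp at h
      exact hα0.ne' h.1
    simp [phi, Complex.zero_cpow, h1, h2, h3]
end

section
/- Let α ∈ (0,1), β > 0 and let a₂ > 0, b₂ ≥ 0 satisfy a₂ ≥ 2b₂·cosh(βπ/2)·√(1 + tan²(απ/2)·tanh²(βπ/2)) (restriction (T3₂)). Then P(s) = 1 + a₂·s^α + b₂·(s^{α+iβ} + s^{α−iβ}) has no zeros in the closed right half-plane: P(s) ≠ 0 for all complex s with Re s ≥ 0. Consequently M²(s) = Q(s)/P(s) has no singular points with Re s ≥ 0. -/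
/-- Lower bound for a sinusoid: `p cos x + q sin x ≥ -√(p² + q²)`. -/
lemma amp_lower (p q x : ℝ) : -Real.sqrt (p ^ 2 + q ^ 2) ≤ p * Real.cos x + q * Real.sin x := by
  have h1 : (p * Real.cos x + q * Real.sin x) ^ 2 ≤ p ^ 2 + q ^ 2 := by
    nlinarith [sq_nonneg (p * Real.sin x - q * Real.cos x), Real.sin_sq_add_cos_sq x]
  have h2 : |p * Real.cos x + q * Real.sin x| ≤ Real.sqrt (p ^ 2 + q ^ 2) := by
    rw [← Real.sqrt_sq_eq_abs]; exact Real.sqrt_le_sqrt h1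
  linarith [neg_abs_le (p * Real.cos x + q * Real.sin x)]

/-- `Ctan² · cos²(απ/2) = cosh²(βπ/2) cos²(απ/2) + sinh²(βπ/2) sin²(απ/2)`. -/
lemma Ctan_sq (α β : ℝ) (h : Real.cos (α * (Real.pi / 2)) ≠ 0) :
    Ctan α β ^ 2 * Real.cos (α * (Real.pi / 2)) ^ 2 =
      Real.cosh (β * (Real.pi / 2)) ^ 2 * Real.cos (α * (Real.pi / 2)) ^ 2 +
        Real.sinh (β * (Real.pi / 2)) ^ 2 * Real.sin (α * (Real.pi / 2)) ^ 2 := by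
  have hq : Real.cosh (β * (Real.pi / 2)) ≠ 0 := (Real.cosh_pos _).ne'
  rw [Ctan, mul_pow, Real.sq_sqrt (by positivity), Real.tan_eq_sin_div_cos,
    Real.tanh_eq_sinh_div_cosh]
  set u := Real.sin (α * (Real.pi / 2))
  set v := Real.cos (α * (Real.pi / 2))
  set p := Real.sinh (β * (Real.pi / 2))
  set q := Real.cosh (β * (Real.pi / 2))
  field_simp

set_option maxHeartbeats 1600000 in
/-- Under (T3₂) with `a₂ > 0`, `b₂ ≥ 0`, the function
`P(s) = 1 + a₂·s^α + b₂·(s^{α+iβ} + s^{α−iβ})` has no zeros in the closed right half-plane,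
so `M²(s) = Q(s)/P(s)` has no singular points with `Re s ≥ 0`. -/
theorem stmt_17 (α β a₂ b₂ : ℝ) (hα : α ∈ Set.Ioo (0:ℝ) 1) (hβ : 0 < β)
    (ha₂ : 0 < a₂) (hb₂ : 0 ≤ b₂) (hT3 : a₂ ≥ 2 * b₂ * Ctan α β) :
    ∀ s : ℂ, 0 ≤ s.re → phi α β a₂ b₂ s ≠ 0 := by
  obtain ⟨hα0, hα1⟩ := hα
  have hπ := Real.pi_pos
  intro s hs
  by_cases h0 : s = 0
  · subst h0
    have h1 : (α : ℂ) ≠ 0 := by exact_mod_cast hα0.ne'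
    have h2 : (α : ℂ) + Complex.I * (β : ℂ) ≠ 0 := by
      intro h; have := congrArg Complex.re h; simp at this; linarith
    have h3 : (α : ℂ) - Complex.I * (β : ℂ) ≠ 0 := by
      intro h; have := congrArg Complex.re h; simp at this; linarith
    simp [phi, Complex.zero_cpow, h1, h2, h3]
  -- nonzero case: compute the real part explicitly
  set L := (Complex.log s).re with hL
  set θ := (Complex.log s).im with hθdef
  have hre : (phi α β a₂ b₂ s).re =
      1 + a₂ * (Real.exp (L * α) * Real.cos (θ * α)) +
        b₂ * (Real.exp (L * α - θ * β) * Real.cos (L * β + θ * α) +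
            Real.exp (L * α + θ * β) * Real.cos (θ * α - L * β)) := by
    simp [phi, Complex.cpow_def_of_ne_zero h0, Complex.exp_re, Complex.add_re, Complex.add_im,
      Complex.sub_re, Complex.sub_im, Complex.mul_re, Complex.mul_im]
    ring_nf
    rw [← hL, ← hθdef]
    ring_nf
  have hθ : |θ| ≤ Real.pi / 2 := by
    rw [hθdef, Complex.log_im]
    exact Complex.abs_arg_le_pi_div_two_iff.2 hs
  set A' := α * (Real.pi / 2) with hA'
  set B := β * (Real.pi / 2) with hB
  -- basic bounds
  have hθα : |θ * α| ≤ A' := by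
    rw [abs_mul, abs_of_pos hα0, hA']
    calc |θ| * α ≤ (Real.pi / 2) * α := mul_le_mul_of_nonneg_right hθ hα0.le
      _ = α * (Real.pi / 2) := by ring
  have hθβ : |θ * β| ≤ B := by
    rw [abs_mul, abs_of_pos hβ, hB]
    calc |θ| * β ≤ (Real.pi / 2) * β := mul_le_mul_of_nonneg_right hθ hβ.le
      _ = β * (Real.pi / 2) := by ring
  have hA'pos : 0 < A' := by positivity
  have hA'lt : A' < Real.pi / 2 := by rw [hA']; nlinarith
  have hBpos : 0 < B := by positivity
  have hcosA' : 0 < Real.cos A' := Real.cos_pos_of_mem_Ioo ⟨by linarith, hA'lt⟩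
  have hc : 0 < Real.cos (θ * α) := by
    apply Real.cos_pos_of_mem_Ioo
    constructor
    · have := (abs_le.mp hθα).1; linarith
    · have := (abs_le.mp hθα).2; linarith
  -- cosh and sinh bounds
  have hch : Real.cosh (θ * β) ^ 2 ≤ Real.cosh B ^ 2 := by
    have h := Real.cosh_le_cosh.2 (by rwa [abs_of_pos hBpos] : |θ * β| ≤ |B|)
    exact pow_le_pow_left₀ (Real.cosh_pos _).le h 2
  have hsh : Real.sinh (θ * β) ^ 2 ≤ Real.sinh B ^ 2 := by
    have h1 : |Real.sinh (θ * β)| ≤ Real.sinh B := by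
      rw [Real.abs_sinh]; exact Real.sinh_le_sinh.2 hθβ
    calc Real.sinh (θ * β) ^ 2 = |Real.sinh (θ * β)| ^ 2 := (sq_abs _).symm
      _ ≤ Real.sinh B ^ 2 := pow_le_pow_left₀ (abs_nonneg _) h1 2
  -- sin bound: sin²(θα) cos²(A') ≤ cos²(θα) sin²(A')
  have hsin : Real.sin (θ * α) ^ 2 * Real.cos A' ^ 2 ≤ Real.cos (θ * α) ^ 2 * Real.sin A' ^ 2 := by
    have h1 : 0 ≤ Real.sin (A' - θ * α) := by
      apply Real.sin_nonneg_of_nonneg_of_le_pi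
      · have := (abs_le.mp hθα).2; linarith
      · have := (abs_le.mp hθα).1; linarith [hA'lt]
    have h2 : 0 ≤ Real.sin (A' + θ * α) := by
      apply Real.sin_nonneg_of_nonneg_of_le_pi
      · have := (abs_le.mp hθα).1; linarith
      · have := (abs_le.mp hθα).2; linarith [hA'lt]
    rw [Real.sin_sub] at h1
    rw [Real.sin_add] at h2
    nlinarith [mul_nonneg h1 h2]
  have hCtan_pos : 0 < Ctan α β := by
    rw [Ctan]
    exact mul_pos (Real.cosh_pos _) (Real.sqrt_pos.2 (by positivity))
  have hCtan_sq : Ctan α β ^ 2 * Real.cos A' ^ 2 =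
      Real.cosh B ^ 2 * Real.cos A' ^ 2 + Real.sinh B ^ 2 * Real.sin A' ^ 2 := by
    rw [hA', hB]
    exact Ctan_sq α β (by rw [← hA']; exact hcosA'.ne')
  -- amplitude bound
  set c := Real.cos (θ * α)
  set sn := Real.sin (θ * α)
  set ch := Real.cosh (θ * β)
  set sh := Real.sinh (θ * β)
  have hamp_sq : (ch * c) ^ 2 + (sh * sn) ^ 2 ≤ (c * Ctan α β) ^ 2 := by
    have key : ((ch * c) ^ 2 + (sh * sn) ^ 2) * Real.cos A' ^ 2 ≤
        (c * Ctan α β) ^ 2 * Real.cos A' ^ 2 := by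
      have e : (c * Ctan α β) ^ 2 * Real.cos A' ^ 2 =
          c ^ 2 * (Real.cosh B ^ 2 * Real.cos A' ^ 2 + Real.sinh B ^ 2 * Real.sin A' ^ 2) := by
        rw [mul_pow, mul_assoc, hCtan_sq]
      rw [e]
      nlinarith [sq_nonneg c, sq_nonneg sn, sq_nonneg (Real.cos A'), sq_nonneg (Real.sinh B),
        mul_le_mul_of_nonneg_right hch (mul_nonneg (sq_nonneg c) (sq_nonneg (Real.cos A'))),
        mul_le_mul_of_nonneg_right hsh (mul_nonneg (sq_nonneg sn) (sq_nonneg (Real.cos A'))),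
        mul_le_mul_of_nonneg_left hsin (sq_nonneg (Real.sinh B))]
    exact le_of_mul_le_mul_right key (by positivity)
  have hamp : Real.sqrt ((ch * c) ^ 2 + (sh * sn) ^ 2) ≤ c * Ctan α β := by
    have := Real.sqrt_le_sqrt hamp_sq
    rwa [Real.sqrt_sq (by positivity : (0:ℝ) ≤ c * Ctan α β)] at this
  -- split the b-term using cosh/sinh
  have hsplit : Real.exp (L * α - θ * β) * Real.cos (L * β + θ * α) +
      Real.exp (L * α + θ * β) * Real.cos (θ * α - L * β) =
      Real.exp (L * α) * (2 * ((ch * c) * Real.cos (L * β) + (sh * sn) * Real.sin (L * β))) := by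
    rw [show L * α - θ * β = L * α + -(θ * β) by ring, Real.exp_add, Real.exp_add,
      Real.cos_add, Real.cos_sub, ← Real.cosh_sub_sinh (θ * β), ← Real.cosh_add_sinh (θ * β)]
    ring
  have hlow : -(c * Ctan α β) ≤ (ch * c) * Real.cos (L * β) + (sh * sn) * Real.sin (L * β) := by
    have := amp_lower (ch * c) (sh * sn) (L * β)
    linarith
  have hpos : 0 < (phi α β a₂ b₂ s).re := by
    rw [hre, hsplit]
    have hE : 0 < Real.exp (L * α) := Real.exp_pos _
    have h1 : 0 ≤ a₂ * c +
        b₂ * (2 * ((ch * c) * Real.cos (L * β) + (sh * sn) * Real.sin (L * β))) := by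
      have h2 : b₂ * (2 * (-(c * Ctan α β))) ≤
          b₂ * (2 * ((ch * c) * Real.cos (L * β) + (sh * sn) * Real.sin (L * β))) :=
        mul_le_mul_of_nonneg_left (by linarith) hb₂
      have h3 : 2 * b₂ * Ctan α β * c ≤ a₂ * c := mul_le_mul_of_nonneg_right hT3 hc.le
      nlinarith
    nlinarith
  intro h
  rw [h] at hpos
  simp at hpos
end
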